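/- Let p and q be distinct primes, and let C_p and C_q denote the multiplicative groups of complex p-th and q-th roots of unity. Let H be a subgroup of the direct product U(1) × C_p × C_q whose intersection with the factor U(1) × {1} × {1} is trivial. Then H is cyclic and the order of H divides p·q (so any nontrivial such H is isomorphic to C_p, C_q, or C_{pq}). -/

import Mathlib

lemma prod_isCyclic_of_coprime {G H : Type*} [Group G] [Group H] [Fintype G] [Fintype H]
    [IsCyclic G] [IsCyclic H] (h : Nat.Coprime (Fintype.card G) (Fintype.card H)) :
    IsCyclic (G × H) := by
  obtain ⟨g, hg⟩ := IsCyclic.exists_generator (α := G)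
  obtain ⟨k, hk⟩ := IsCyclic.exists_generator (α := H)
  have hgo : orderOf g = Nat.card G := orderOf_eq_card_of_forall_mem_zpowers hg
  have hko : orderOf k = Nat.card H := orderOf_eq_card_of_forall_mem_zpowers hk
  apply isCyclic_of_orderOf_eq_card (g, k)
  rw [Nat.card_prod, Prod.orderOf_mk, hgo, hko]
  rw [Nat.card_eq_fintype_card, Nat.card_eq_fintype_card] at *
  exact Nat.Coprime.lcm_eq_mul h

/-- **Classification of possible central subgroups (Theorem 3.1).**
Let `p` and `q` be distinct primes, `C_p` and `C_q` the groups of complex `p`-th and `q`-th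
roots of unity.  Any subgroup `H` of `U(1) × C_p × C_q` meeting the factor `U(1) × 1 × 1`
trivially is cyclic of order dividing `p * q`. -/
theorem covering_groups_classification (p q : ℕ) (hp : p.Prime) (hq : q.Prime) (hpq : p ≠ q)
    (H : Subgroup (Circle × (rootsOfUnity p ℂ) × (rootsOfUnity q ℂ)))
    (htriv : ∀ h ∈ H, h.2.1 = 1 → h.2.2 = 1 → h = 1) :
    IsCyclic H ∧ Nat.card H ∣ p * q := by
  have : NeZero p := ⟨hp.ne_zero⟩
  have : NeZero q := ⟨hq.ne_zero⟩
  have : Fintype (rootsOfUnity p ℂ) := Fintype.ofFinite _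
  have : Fintype (rootsOfUnity q ℂ) := Fintype.ofFinite _
  set K := rootsOfUnity p ℂ × rootsOfUnity q ℂ
  have hcyc : IsCyclic K := by
    apply prod_isCyclic_of_coprime
    rw [← Nat.card_eq_fintype_card, ← Nat.card_eq_fintype_card, Complex.card_rootsOfUnity,
      Complex.card_rootsOfUnity]
    exact (Nat.coprime_primes hp hq).mpr hpq
  let f : H →* K :=
    ((MonoidHom.snd Circle _).comp H.subtype)
  have hinj : Function.Injective f := by
    intro a b hab
    have key : ((a * b⁻¹ : H) : Circle × (rootsOfUnity p ℂ) × (rootsOfUnity q ℂ)) = 1 := by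
      apply htriv _ (a * b⁻¹).2
      · have : f (a * b⁻¹) = 1 := by rw [map_mul, map_inv, hab, mul_inv_cancel]
        exact congrArg Prod.fst this
      · have : f (a * b⁻¹) = 1 := by rw [map_mul, map_inv, hab, mul_inv_cancel]
        exact congrArg Prod.snd this
    have : (a * b⁻¹ : H) = 1 := Subtype.ext key
    rwa [mul_inv_eq_one] at this
  have hcard : Nat.card H ∣ p * q := by
    have h1 : Nat.card H = Nat.card f.range := (Nat.card_congr
      (MonoidHom.ofInjective hinj).toEquiv)
    rw [h1]
    have h2 : Nat.card f.range ∣ Nat.card K := Subgroup.card_subgroup_dvd_card f.range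
    have h3 : Nat.card K = p * q := by
      rw [Nat.card_prod,
        Complex.card_rootsOfUnity, Complex.card_rootsOfUnity]
    rwa [h3] at h2
  refine ⟨?_, hcard⟩
  have : IsCyclic f.range := Subgroup.isCyclic f.range
  exact isCyclic_of_surjective (MonoidHom.ofInjective hinj).symm
    (MonoidHom.ofInjective hinj).symm.surjective
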